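/- arXiv:1802.09794 — 2 statements merged into one kernel-verified Lean document; each statement's English description precedes it below -/
import Mathlib

section
/- Consider the optimization problem min_k ‖y − Φk‖₂² + λ²‖D₁k‖₂² over k ∈ ℝ^{TK}, where Φ is block diagonal with blocks Φ_t ∈ ℝ^{n×K} and D₁ is the block first-difference operator. For every λ > 0, the problem has a unique minimizer if and only if ∑_{t=1}^T Φ_tᵀΦ_t is positive definite (equivalently, the corresponding LTI least-squares problem has a unique solution). -/
open Matrix

namespace Stmt11Aux

variable {T n K : ℕ}

/-- block first difference -/
def dOp (k : Fin T → Fin K → ℝ) (s : Fin (T - 1)) : Fin K → ℝ :=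
  k ⟨s.1 + 1, by have := s.2; omega⟩ - k ⟨s.1, by have := s.2; omega⟩

lemma dOp_add (u v : Fin T → Fin K → ℝ) (s : Fin (T-1)) :
    dOp (u + v) s = dOp u s + dOp v s := by
  simp [dOp]; abel

lemma dOp_smul (c : ℝ) (u : Fin T → Fin K → ℝ) (s : Fin (T-1)) :
    dOp (c • u) s = c • dOp u s := by
  simp [dOp, smul_sub]

/-- objective -/
def f (Φ : Fin T → Matrix (Fin n) (Fin K) ℝ) (y : Fin T → Fin n → ℝ) (lam : ℝ)
    (k : Fin T → Fin K → ℝ) : ℝ :=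
  (∑ t : Fin T, (y t - (Φ t).mulVec (k t)) ⬝ᵥ (y t - (Φ t).mulVec (k t))) +
    lam ^ 2 * ∑ s : Fin (T - 1), (dOp k s ⬝ᵥ dOp k s)

noncomputable def Bf (Φ : Fin T → Matrix (Fin n) (Fin K) ℝ) (lam : ℝ) :
    (Fin T → Fin K → ℝ) →ₗ[ℝ] (Fin T → Fin K → ℝ) →ₗ[ℝ] ℝ :=
  LinearMap.mk₂ ℝ
    (fun u v => (∑ t : Fin T, (Φ t).mulVec (u t) ⬝ᵥ (Φ t).mulVec (v t)) +
      lam ^ 2 * ∑ s : Fin (T - 1), (dOp u s ⬝ᵥ dOp v s))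
    (by
      intro u u' v
      simp only [Pi.add_apply, Matrix.mulVec_add, add_dotProduct, dOp_add,
        Finset.sum_add_distrib, mul_add]
      ring)
    (by
      intro c u v
      simp only [Pi.smul_apply, Matrix.mulVec_smul, smul_dotProduct, dOp_smul,
        Finset.smul_sum, smul_eq_mul, Finset.mul_sum]
      ring_nf
      rw [Finset.mul_sum, Finset.mul_sum]
      ring_nf)
    (by
      intro u v v'
      simp only [Pi.add_apply, Matrix.mulVec_add, dotProduct_add, dOp_add,
        Finset.sum_add_distrib, mul_add]
      ring)
    (by
      intro c u v
      simp only [Pi.smul_apply, Matrix.mulVec_smul, dotProduct_smul, dOp_smul,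
        smul_eq_mul, Finset.mul_sum]
      ring_nf
      rw [Finset.mul_sum, Finset.mul_sum]
      ring_nf)

lemma Bf_apply (Φ : Fin T → Matrix (Fin n) (Fin K) ℝ) (lam : ℝ) (u v : Fin T → Fin K → ℝ) :
    Bf Φ lam u v = (∑ t : Fin T, (Φ t).mulVec (u t) ⬝ᵥ (Φ t).mulVec (v t)) +
      lam ^ 2 * ∑ s : Fin (T - 1), (dOp u s ⬝ᵥ dOp v s) := rfl

lemma Bf_symm (Φ : Fin T → Matrix (Fin n) (Fin K) ℝ) (lam : ℝ) (u v : Fin T → Fin K → ℝ) :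
    Bf Φ lam u v = Bf Φ lam v u := by
  simp only [Bf_apply]
  congr 1
  · exact Finset.sum_congr rfl fun t _ => dotProduct_comm _ _
  · rw [Finset.sum_congr rfl fun s _ => dotProduct_comm (dOp u s) (dOp v s)]

noncomputable def Lf (Φ : Fin T → Matrix (Fin n) (Fin K) ℝ) (y : Fin T → Fin n → ℝ) :
    (Fin T → Fin K → ℝ) →ₗ[ℝ] ℝ where
  toFun k := ∑ t : Fin T, y t ⬝ᵥ (Φ t).mulVec (k t)
  map_add' u v := by
    simp only [Pi.add_apply, Matrix.mulVec_add, dotProduct_add, Finset.sum_add_distrib]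
  map_smul' c u := by
    simp only [Pi.smul_apply, Matrix.mulVec_smul, dotProduct_smul, smul_eq_mul,
      RingHom.id_apply, Finset.mul_sum]

lemma f_expand (Φ : Fin T → Matrix (Fin n) (Fin K) ℝ) (y : Fin T → Fin n → ℝ) (lam : ℝ)
    (k : Fin T → Fin K → ℝ) :
    f Φ y lam k = Bf Φ lam k k - 2 * Lf Φ y k + ∑ t : Fin T, y t ⬝ᵥ y t := by
  simp only [f, Bf_apply, Lf, LinearMap.coe_mk, AddHom.coe_mk]
  have : ∀ t : Fin T, (y t - (Φ t).mulVec (k t)) ⬝ᵥ (y t - (Φ t).mulVec (k t)) =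
      (Φ t).mulVec (k t) ⬝ᵥ (Φ t).mulVec (k t) - 2 * (y t ⬝ᵥ (Φ t).mulVec (k t)) +
        y t ⬝ᵥ y t := by
    intro t
    simp only [sub_dotProduct, dotProduct_sub]
    rw [dotProduct_comm ((Φ t).mulVec (k t)) (y t)]
    ring
  rw [Finset.sum_congr rfl fun t _ => this t]
  rw [Finset.sum_add_distrib, Finset.sum_sub_distrib, ← Finset.mul_sum]
  ring

end Stmt11Aux

namespace Stmt11Aux

lemma dot_self_nonneg {m : ℕ} (v : Fin m → ℝ) : 0 ≤ v ⬝ᵥ v :=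
  Finset.sum_nonneg fun i _ => mul_self_nonneg _

lemma sum_mulVec {m : ℕ} (S : Fin T → Matrix (Fin m) (Fin K) ℝ) (x : Fin K → ℝ) :
    (∑ t, S t) *ᵥ x = ∑ t, S t *ᵥ x := by
  ext i
  simp only [Matrix.mulVec, dotProduct, Matrix.sum_apply, Finset.sum_apply,
    Finset.sum_mul]
  rw [Finset.sum_comm]

lemma dot_sum {m : ℕ} (x : Fin m → ℝ) (w : Fin T → Fin m → ℝ) :
    x ⬝ᵥ (∑ t, w t) = ∑ t, x ⬝ᵥ w t := by
  simp only [dotProduct, Finset.sum_apply, Finset.mul_sum]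
  rw [Finset.sum_comm]

/-- quad form of the LTI matrix -/
lemma quadform_eq (Φ : Fin T → Matrix (Fin n) (Fin K) ℝ) (x : Fin K → ℝ) :
    star x ⬝ᵥ (∑ t : Fin T, (Φ t)ᵀ * Φ t) *ᵥ x
      = ∑ t : Fin T, ((Φ t) *ᵥ x) ⬝ᵥ ((Φ t) *ᵥ x) := by
  rw [star_trivial, sum_mulVec, dot_sum]
  refine Finset.sum_congr rfl fun t _ => ?_
  rw [← Matrix.mulVec_mulVec, dotProduct_mulVec, vecMul_transpose]

lemma Bf_self_nonneg (Φ : Fin T → Matrix (Fin n) (Fin K) ℝ) {lam : ℝ} (hlam : 0 < lam)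
    (u : Fin T → Fin K → ℝ) : 0 ≤ Bf Φ lam u u := by
  rw [Bf_apply]
  have h1 : 0 ≤ ∑ t : Fin T, (Φ t).mulVec (u t) ⬝ᵥ (Φ t).mulVec (u t) :=
    Finset.sum_nonneg fun t _ => dot_self_nonneg _
  have h2 : 0 ≤ ∑ s : Fin (T - 1), (dOp u s ⬝ᵥ dOp u s) :=
    Finset.sum_nonneg fun s _ => dot_self_nonneg _
  nlinarith

lemma const_of_dOp_zero (hT : 1 ≤ T) (u : Fin T → Fin K → ℝ)
    (hd : ∀ s : Fin (T - 1), dOp u s = 0) (t : Fin T) : u t = u ⟨0, by omega⟩ := by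
  obtain ⟨m, hm⟩ := t
  induction m with
  | zero => rfl
  | succ m ih =>
    have hs : m < T - 1 := by omega
    have h := hd ⟨m, hs⟩
    have h' : u ⟨m + 1, hm⟩ = u ⟨m, by omega⟩ := by
      have := sub_eq_zero.mpr (Eq.refl (u ⟨m, by omega⟩))
      simpa [dOp, sub_eq_zero] using h
    rw [h', ih (by omega)]

lemma Bf_posdef (hT : 1 ≤ T) (Φ : Fin T → Matrix (Fin n) (Fin K) ℝ) {lam : ℝ} (hlam : 0 < lam)
    (hpos : (∑ t : Fin T, (Φ t)ᵀ * Φ t).PosDef) (u : Fin T → Fin K → ℝ) (hu : u ≠ 0) :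
    0 < Bf Φ lam u u := by
  rcases lt_or_eq_of_le (Bf_self_nonneg Φ hlam u) with h | h
  · exact h
  exfalso
  rw [Bf_apply] at h
  have h1 : 0 ≤ ∑ t : Fin T, (Φ t).mulVec (u t) ⬝ᵥ (Φ t).mulVec (u t) :=
    Finset.sum_nonneg fun t _ => dot_self_nonneg _
  have h2 : 0 ≤ ∑ s : Fin (T - 1), (dOp u s ⬝ᵥ dOp u s) :=
    Finset.sum_nonneg fun s _ => dot_self_nonneg _
  have hl2 : 0 < lam ^ 2 := by positivity
  have hA : ∑ t : Fin T, (Φ t).mulVec (u t) ⬝ᵥ (Φ t).mulVec (u t) = 0 := by nlinarith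
  have hB : ∑ s : Fin (T - 1), (dOp u s ⬝ᵥ dOp u s) = 0 := by nlinarith
  have hAz : ∀ t : Fin T, (Φ t).mulVec (u t) = 0 := by
    intro t
    have := (Finset.sum_eq_zero_iff_of_nonneg (fun t _ => dot_self_nonneg
      ((Φ t).mulVec (u t)))).mp hA t (Finset.mem_univ t)
    exact dotProduct_self_eq_zero.mp this
  have hBz : ∀ s : Fin (T - 1), dOp u s = 0 := by
    intro s
    have := (Finset.sum_eq_zero_iff_of_nonneg (fun s _ => dot_self_nonneg
      (dOp u s))).mp hB s (Finset.mem_univ s)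
    exact dotProduct_self_eq_zero.mp this
  set a : Fin K → ℝ := u ⟨0, by omega⟩ with ha
  have hconst := const_of_dOp_zero hT u hBz
  have haz : a = 0 := by
    by_contra hane
    have := hpos.dotProduct_mulVec_pos hane
    rw [quadform_eq] at this
    have : (0:ℝ) < ∑ t : Fin T, ((Φ t) *ᵥ (u t)) ⬝ᵥ ((Φ t) *ᵥ (u t)) := by
      refine lt_of_lt_of_eq this (Finset.sum_congr rfl fun t _ => ?_)
      rw [ha, ← hconst t]
    rw [hA] at this
    exact lt_irrefl _ this
  apply hu
  funext t
  rw [hconst t, ← ha, haz]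
  rfl

lemma f_quad (Φ : Fin T → Matrix (Fin n) (Fin K) ℝ) (y : Fin T → Fin n → ℝ) (lam : ℝ)
    (kstar : Fin T → Fin K → ℝ) (hstat : ∀ h, Bf Φ lam kstar h = Lf Φ y h)
    (k : Fin T → Fin K → ℝ) :
    f Φ y lam k = f Φ y lam kstar + Bf Φ lam (k - kstar) (k - kstar) := by
  have hk : k = kstar + (k - kstar) := by abel
  rw [f_expand, f_expand]
  set d := k - kstar with hd
  have e1 : Bf Φ lam k k = Bf Φ lam kstar kstar + 2 * Bf Φ lam kstar d + Bf Φ lam d d := by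
    conv_lhs => rw [hk]
    simp only [map_add, LinearMap.add_apply]
    rw [Bf_symm Φ lam d kstar]
    ring
  have e2 : Lf Φ y k = Lf Φ y kstar + Lf Φ y d := by
    conv_lhs => rw [hk]
    simp only [map_add]
  rw [e1, e2, hstat d]
  ring

end Stmt11Aux

namespace Stmt11Aux

theorem main_iff (hT : 2 ≤ T) (Φ : Fin T → Matrix (Fin n) (Fin K) ℝ)
    (y : Fin T → Fin n → ℝ) (lam : ℝ) (hlam : 0 < lam) :
    (∃! kstar : Fin T → Fin K → ℝ, ∀ k, f Φ y lam kstar ≤ f Φ y lam k) ↔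
      (∑ t : Fin T, (Φ t)ᵀ * Φ t).PosDef := by
  have hT1 : 1 ≤ T := by omega
  constructor
  · rintro ⟨kstar, hmin, huniq⟩
    refine Matrix.PosDef.of_dotProduct_mulVec_pos ?_ ?_
    · -- Hermitian
      unfold Matrix.IsHermitian
      rw [Matrix.conjTranspose_sum]
      refine Finset.sum_congr rfl fun t _ => ?_
      rw [Matrix.conjTranspose_mul, Matrix.conjTranspose_eq_transpose_of_trivial,
        Matrix.conjTranspose_eq_transpose_of_trivial, Matrix.transpose_transpose]
    · intro x hx
      by_contra hle
      push_neg at hle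
      rw [quadform_eq] at hle
      have hge : 0 ≤ ∑ t : Fin T, ((Φ t) *ᵥ x) ⬝ᵥ ((Φ t) *ᵥ x) :=
        Finset.sum_nonneg fun t _ => dot_self_nonneg _
      have heq : ∑ t : Fin T, ((Φ t) *ᵥ x) ⬝ᵥ ((Φ t) *ᵥ x) = 0 := le_antisymm hle hge
      have hz : ∀ t : Fin T, (Φ t) *ᵥ x = 0 := fun t =>
        dotProduct_self_eq_zero.mp <|
          (Finset.sum_eq_zero_iff_of_nonneg (fun t _ => dot_self_nonneg ((Φ t) *ᵥ x))).mp
            heq t (Finset.mem_univ t)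
      -- shifted minimizer
      set k' : Fin T → Fin K → ℝ := fun t => kstar t + x with hk'
      have hfeq : f Φ y lam k' = f Φ y lam kstar := by
        unfold f
        congr 1
        · refine Finset.sum_congr rfl fun t _ => ?_
          rw [hk']
          simp only [Matrix.mulVec_add, hz t, add_zero]
        · congr 1
          refine Finset.sum_congr rfl fun s _ => ?_
          have : dOp k' s = dOp kstar s := by
            simp only [dOp, hk']
            abel
          rw [this]
      have hk'min : ∀ k, f Φ y lam k' ≤ f Φ y lam k := by
        intro k; rw [hfeq]; exact hmin k
      have := huniq k' hk'min
      apply hx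
      have h0 : k' ⟨0, by omega⟩ = kstar ⟨0, by omega⟩ := by rw [this]
      rw [hk'] at h0
      simpa using h0
  · intro hpos
    have nd : LinearMap.BilinForm.Nondegenerate (Bf Φ lam) := ⟨fun u hu => by
      by_contra hne
      exact absurd (hu u) (ne_of_gt (Bf_posdef hT1 Φ hlam hpos u hne)), fun u hu => by
      by_contra hne
      exact absurd (hu u) (ne_of_gt (Bf_posdef hT1 Φ hlam hpos u hne))⟩
    set kstar := (LinearMap.BilinForm.toDual (Bf Φ lam) nd).symm (Lf Φ y) with hks
    have hstat : ∀ h, Bf Φ lam kstar h = Lf Φ y h := fun h =>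
      LinearMap.BilinForm.apply_toDual_symm_apply (hB := nd) (Lf Φ y) h
    refine ⟨kstar, fun k => ?_, fun k' hk' => ?_⟩
    · rw [f_quad Φ y lam kstar hstat k]
      have := Bf_self_nonneg Φ hlam (k - kstar)
      linarith
    · have h1 : f Φ y lam k' ≤ f Φ y lam kstar := hk' kstar
      have h2 : f Φ y lam kstar ≤ f Φ y lam k' := by
        rw [f_quad Φ y lam kstar hstat k']
        have := Bf_self_nonneg Φ hlam (k' - kstar)
        linarith
      have heq : f Φ y lam k' = f Φ y lam kstar := le_antisymm h1 h2
      have hq : Bf Φ lam (k' - kstar) (k' - kstar) = 0 := by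
        have := f_quad Φ y lam kstar hstat k'
        linarith
      by_contra hne
      have hd : k' - kstar ≠ 0 := sub_ne_zero.mpr hne
      exact absurd hq (ne_of_gt (Bf_posdef hT1 Φ hlam hpos _ hd))

end Stmt11Aux

/-- The first-difference-regularized LTV least-squares problem has a unique minimizer
for every `λ > 0` iff `∑ₜ Φₜᵀ Φₜ` is positive definite (i.e., the LTI problem is
well posed). -/
theorem stmt_11 {T n K : ℕ} (hT : 2 ≤ T)
    (Φ : Fin T → Matrix (Fin n) (Fin K) ℝ) (y : Fin T → Fin n → ℝ)
    (lam : ℝ) (hlam : 0 < lam) :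
    (∃! kstar : Fin T → Fin K → ℝ,
      ∀ k : Fin T → Fin K → ℝ,
        (∑ t : Fin T, (y t - (Φ t).mulVec (kstar t)) ⬝ᵥ (y t - (Φ t).mulVec (kstar t))) +
          lam ^ 2 * ∑ t : Fin (T - 1),
            ((kstar ⟨t.1 + 1, by have := t.2; omega⟩ - kstar ⟨t.1, by have := t.2; omega⟩) ⬝ᵥ
             (kstar ⟨t.1 + 1, by have := t.2; omega⟩ - kstar ⟨t.1, by have := t.2; omega⟩)) ≤
        (∑ t : Fin T, (y t - (Φ t).mulVec (k t)) ⬝ᵥ (y t - (Φ t).mulVec (k t))) +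
          lam ^ 2 * ∑ t : Fin (T - 1),
            ((k ⟨t.1 + 1, by have := t.2; omega⟩ - k ⟨t.1, by have := t.2; omega⟩) ⬝ᵥ
             (k ⟨t.1 + 1, by have := t.2; omega⟩ - k ⟨t.1, by have := t.2; omega⟩))) ↔
    (∑ t : Fin T, (Φ t)ᵀ * Φ t).PosDef := by
  exact Stmt11Aux.main_iff hT Φ y lam hlam
end

section
/- Consider min_k ‖y − Φk‖₂² + λ²‖D₂k‖₂² with Φ block diagonal with blocks Φ_t and D₂ the block second-difference operator, T ≥ 3, λ > 0. The problem has a unique minimizer if and only if there is no nonzero pair (a,b) ∈ ℝᴷ × ℝᴷ with Φ_t(a + t·b) = 0 for all t = 1,…,T. -/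
open Matrix
open scoped RealInnerProductSpace

noncomputable section Stmt12Aux

variable {T n K : ℕ}

/-- The combined linear map (Φk, lam · D₂ k). -/
def Lmap (Φ : Fin T → Matrix (Fin n) (Fin K) ℝ) (lam : ℝ) :
    (Fin T → Fin K → ℝ) →ₗ[ℝ]
      EuclideanSpace ℝ ((Fin T × Fin n) ⊕ (Fin (T - 2) × Fin K)) where
  toFun k := WithLp.toLp 2 (fun x : (Fin T × Fin n) ⊕ (Fin (T - 2) × Fin K) => Sum.elim
    (fun p => (Φ p.1).mulVec (k p.1) p.2)
    (fun q => lam * ((k ⟨q.1.1 + 2, by have := q.1.2; omega⟩ -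
        (2 : ℝ) • k ⟨q.1.1 + 1, by have := q.1.2; omega⟩ +
        k ⟨q.1.1, by have := q.1.2; omega⟩) q.2)) x)
  map_add' k k' := by
    ext x
    cases x with
    | inl p => simp [Matrix.mulVec_add]
    | inr q => simp; ring
  map_smul' c k := by
    ext x
    cases x with
    | inl p => simp [Matrix.mulVec_smul]
    | inr q => simp; ring

/-- The target vector (y, 0). -/
def cvec (y : Fin T → Fin n → ℝ) :
    EuclideanSpace ℝ ((Fin T × Fin n) ⊕ (Fin (T - 2) × Fin K)) :=
  WithLp.toLp 2 (fun x : (Fin T × Fin n) ⊕ (Fin (T - 2) × Fin K) => Sum.elim (fun p => y p.1 p.2) (fun _ => 0) x)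

theorem stmt12_i2 (t : Fin (T - 2)) : t.1 + 2 < T := by have := t.2; omega

theorem stmt12_i1 (t : Fin (T - 2)) : t.1 + 1 < T := by have := t.2; omega

theorem stmt12_i0 (t : Fin (T - 2)) : t.1 < T := by have := t.2; omega

theorem obj_eq (Φ : Fin T → Matrix (Fin n) (Fin K) ℝ) (lam : ℝ)
    (y : Fin T → Fin n → ℝ) (k : Fin T → Fin K → ℝ) :
    (∑ t : Fin T, (y t - (Φ t).mulVec (k t)) ⬝ᵥ (y t - (Φ t).mulVec (k t))) +
          lam ^ 2 * ∑ t : Fin (T - 2),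
            ((k ⟨t.1 + 2, stmt12_i2 t⟩ -
                (2 : ℝ) • k ⟨t.1 + 1, stmt12_i1 t⟩ +
                k ⟨t.1, stmt12_i0 t⟩) ⬝ᵥ
             (k ⟨t.1 + 2, stmt12_i2 t⟩ -
                (2 : ℝ) • k ⟨t.1 + 1, stmt12_i1 t⟩ +
                k ⟨t.1, stmt12_i0 t⟩)) =
    ‖Lmap Φ lam k - (cvec (K := K) y)‖ ^ 2 := by
  rw [← real_inner_self_eq_norm_sq, PiLp.inner_apply]
  rw [Fintype.sum_sum_type]
  simp only [Fintype.sum_prod_type, dotProduct, Finset.mul_sum]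
  congr 1
  · refine Finset.sum_congr rfl fun t _ => Finset.sum_congr rfl fun i _ => ?_
    simp [Lmap, cvec, Pi.sub_apply]
    ring
  · refine Finset.sum_congr rfl fun t _ => Finset.sum_congr rfl fun i _ => ?_
    simp [Lmap, cvec, Pi.sub_apply]
    rw [mul_pow, sq_abs, sq_abs]
    ring

/-- Sequences with vanishing second differences are affine in time. -/
theorem affine_of_d2 (hT : 3 ≤ T) (k : Fin T → Fin K → ℝ)
    (h : ∀ s : Fin (T - 2), ∀ i : Fin K,
      k ⟨s.1 + 2, stmt12_i2 s⟩ i - 2 * k ⟨s.1 + 1, stmt12_i1 s⟩ i +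
        k ⟨s.1, stmt12_i0 s⟩ i = 0) :
    ∀ m (hm : m < T) (i : Fin K),
      k ⟨m, hm⟩ i = k ⟨0, by omega⟩ i + (m : ℝ) * (k ⟨1, by omega⟩ i - k ⟨0, by omega⟩ i) := by
  intro m
  induction m using Nat.strong_induction_on with
  | _ m ih =>
    intro hm i
    match m, hm with
    | 0, hm => simp
    | 1, hm => simp
    | (s+2), hm =>
      have hs : s < T - 2 := by omega
      have h2 := h ⟨s, hs⟩ i
      have e1 := ih (s+1) (by omega) (by omega) i
      have e0 := ih s (by omega) (by omega) i
      push_cast at e1 e0 ⊢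
      nlinarith [h2, e1, e0]

end Stmt12Aux

/-- The second-difference-regularized LTV least-squares problem has a unique minimizer
iff no nonzero affine-in-time parameter sequence `kₜ = a + t·b` is annihilated by all
regressor blocks `Φₜ`. -/
theorem stmt_12 {T n K : ℕ} (hT : 3 ≤ T)
    (Φ : Fin T → Matrix (Fin n) (Fin K) ℝ) (y : Fin T → Fin n → ℝ)
    (lam : ℝ) (hlam : 0 < lam) :
    (∃! kstar : Fin T → Fin K → ℝ,
      ∀ k : Fin T → Fin K → ℝ,
        (∑ t : Fin T, (y t - (Φ t).mulVec (kstar t)) ⬝ᵥ (y t - (Φ t).mulVec (kstar t))) +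
          lam ^ 2 * ∑ t : Fin (T - 2),
            ((kstar ⟨t.1 + 2, by have := t.2; omega⟩ -
                (2 : ℝ) • kstar ⟨t.1 + 1, by have := t.2; omega⟩ +
                kstar ⟨t.1, by have := t.2; omega⟩) ⬝ᵥ
             (kstar ⟨t.1 + 2, by have := t.2; omega⟩ -
                (2 : ℝ) • kstar ⟨t.1 + 1, by have := t.2; omega⟩ +
                kstar ⟨t.1, by have := t.2; omega⟩)) ≤
        (∑ t : Fin T, (y t - (Φ t).mulVec (k t)) ⬝ᵥ (y t - (Φ t).mulVec (k t))) +
          lam ^ 2 * ∑ t : Fin (T - 2),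
            ((k ⟨t.1 + 2, by have := t.2; omega⟩ -
                (2 : ℝ) • k ⟨t.1 + 1, by have := t.2; omega⟩ +
                k ⟨t.1, by have := t.2; omega⟩) ⬝ᵥ
             (k ⟨t.1 + 2, by have := t.2; omega⟩ -
                (2 : ℝ) • k ⟨t.1 + 1, by have := t.2; omega⟩ +
                k ⟨t.1, by have := t.2; omega⟩))) ↔
    (∀ a b : Fin K → ℝ,
      (∀ t : Fin T, (Φ t).mulVec (a + ((t.1 : ℝ) + 1) • b) = 0) → a = 0 ∧ b = 0) := by
  simp only [obj_eq Φ lam y]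
  set L := Lmap Φ lam with hL
  set c := cvec (K := K) y with hc
  constructor
  · rintro ⟨ks, hks, huniq⟩ a b hab
    set kab : Fin T → Fin K → ℝ := fun t => a + ((t.1 : ℝ) + 1) • b with hkab
    have hLkab : L kab = 0 := by
      ext x
      cases x with
      | inl p =>
        have := congrFun (hab p.1) p.2
        simpa [hL, Lmap, hkab] using this
      | inr q =>
        have hzero : (kab ⟨q.1.1 + 2, by have := q.1.2; omega⟩ -
            (2 : ℝ) • kab ⟨q.1.1 + 1, by have := q.1.2; omega⟩ +
            kab ⟨q.1.1, by have := q.1.2; omega⟩) q.2 = 0 := by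
          simp only [hkab, Pi.add_apply, Pi.sub_apply, Pi.smul_apply, smul_eq_mul]
          push_cast
          ring
        simp only [hL, Lmap, LinearMap.coe_mk, AddHom.coe_mk, Sum.elim_inr, hzero,
          mul_zero, PiLp.zero_apply]
    have hmin2 : ∀ k, ‖L (ks + kab) - c‖ ^ 2 ≤ ‖L k - c‖ ^ 2 := by
      intro k
      rw [map_add, hLkab, add_zero]
      exact hks k
    have heq := huniq (ks + kab) hmin2
    have hkab0 : kab = 0 := by
      have : ks + kab = ks + 0 := by rw [heq, add_zero]
      exact add_left_cancel this
    have h0 : a + (1 : ℝ) • b = 0 := by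
      have := congrFun hkab0 ⟨0, by omega⟩
      simpa [hkab] using this
    have h1 : a + ((1 : ℝ) + 1) • b = 0 := by
      have := congrFun hkab0 ⟨1, by omega⟩
      simpa [hkab] using this
    have hb : b = 0 := by
      funext i
      have e0 := congrFun h0 i
      have e1 := congrFun h1 i
      simp at e0 e1 ⊢
      linarith
    have ha : a = 0 := by
      funext i
      have e0 := congrFun h0 i
      rw [hb] at e0
      simpa using e0
    exact ⟨ha, hb⟩
  · intro hyp
    have hinj : Function.Injective L := by
      rw [injective_iff_map_eq_zero]
      intro k hk
      have hΦ : ∀ t : Fin T, (Φ t).mulVec (k t) = 0 := by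
        intro t
        funext i
        have := congrFun (congrArg WithLp.ofLp hk) (Sum.inl (t, i))
        simpa [hL, Lmap] using this
      have hd2 : ∀ s : Fin (T - 2), ∀ i : Fin K,
          k ⟨s.1 + 2, by have := s.2; omega⟩ i - 2 * k ⟨s.1 + 1, by have := s.2; omega⟩ i +
            k ⟨s.1, by have := s.2; omega⟩ i = 0 := by
        intro s i
        have h0 : lam * ((k ⟨s.1 + 2, by have := s.2; omega⟩ -
            (2 : ℝ) • k ⟨s.1 + 1, by have := s.2; omega⟩ +
            k ⟨s.1, by have := s.2; omega⟩) i) = 0 := by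
          have := congrFun (congrArg WithLp.ofLp hk) (Sum.inr (s, i))
          simpa [hL, Lmap, PiLp.zero_apply] using this
        have h1 := (mul_eq_zero.mp h0).resolve_left (ne_of_gt hlam)
        simp only [Pi.add_apply, Pi.sub_apply, Pi.smul_apply, smul_eq_mul] at h1
        linarith
      have haff := affine_of_d2 hT k hd2
      set k0 : Fin K → ℝ := k ⟨0, by omega⟩ with hk0
      set k1 : Fin K → ℝ := k ⟨1, by omega⟩ with hk1
      set b : Fin K → ℝ := k1 - k0 with hb
      set a : Fin K → ℝ := k0 - b with ha
      have hkt : ∀ t : Fin T, k t = a + ((t.1 : ℝ) + 1) • b := by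
        intro t
        funext i
        have := haff t.1 t.2 i
        simp only [Fin.eta] at this
        simp only [ha, hb, Pi.add_apply, Pi.sub_apply, Pi.smul_apply, smul_eq_mul]
        rw [this]
        ring
      have hab : ∀ t : Fin T, (Φ t).mulVec (a + ((t.1 : ℝ) + 1) • b) = 0 := by
        intro t
        rw [← hkt t]
        exact hΦ t
      obtain ⟨ha0, hb0⟩ := hyp a b hab
      funext t i
      have := congrFun (hkt t) i
      rw [ha0, hb0] at this
      simpa using this
    have hp := (LinearMap.range L).starProjection_apply_mem c
    obtain ⟨ks, hks⟩ := LinearMap.mem_range.mp hp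
    have key : ∀ k : Fin T → Fin K → ℝ,
        ‖L k - c‖ ^ 2 = ‖L ks - c‖ ^ 2 + ‖L k - L ks‖ ^ 2 := by
      intro k
      have hsplit : L k - c = (L ks - c) + (L k - L ks) := by abel
      rw [hsplit, norm_add_sq_real]
      have hinner : (inner ℝ (L ks - c) (L k - L ks) : ℝ) = 0 := by
        have hmem : L k - L ks ∈ LinearMap.range L := ⟨k - ks, by rw [map_sub]⟩
        have h1 := Submodule.starProjection_inner_eq_zero c (L k - L ks) hmem
        rw [← hks] at h1
        have h2 : (inner ℝ (-(c - L ks)) (L k - L ks) : ℝ) = 0 := by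
          rw [inner_neg_left, h1, neg_zero]
        simpa [neg_sub] using h2
      rw [hinner]
      ring
    refine ⟨ks, fun k => ?_, fun k' hk' => ?_⟩
    · rw [key k]
      nlinarith [sq_nonneg ‖L k - L ks‖]
    · have h1 : ‖L k' - c‖ ^ 2 ≤ ‖L ks - c‖ ^ 2 := hk' ks
      have h2 : ‖L k' - c‖ ^ 2 = ‖L ks - c‖ ^ 2 + ‖L k' - L ks‖ ^ 2 := key k'
      have h3 : ‖L k' - L ks‖ ^ 2 ≤ 0 := by linarith
      have h4 : ‖L k' - L ks‖ = 0 := by nlinarith [norm_nonneg (L k' - L ks)]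
      have h5 : L k' = L ks := by
        have := norm_eq_zero.mp h4
        exact sub_eq_zero.mp this
      exact hinj h5
end
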